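/- For r ≥ 3 and u₁, u₂ ∈ V ∩ L^{r+1}, one has |b(u₁,u₂,u₁)| ≤ ‖u₁‖_{L^{r+1}}^{(r+1)/(r-1)} ‖u₁‖_{L²}^{(r-3)/(r-1)} ‖u₂‖_V. -/

import Mathlib

open MeasureTheory Real
noncomputable section

/-- Euclidean 3-space, used both as the periodic box parametrization and target. -/
abbrev E3 := EuclideanSpace ℝ (Fin 3)

/-- The fundamental domain `[0,L]³` of the torus `T³`. -/
def box (L : ℝ) : Set E3 := {x | ∀ i, x i ∈ Set.Icc (0 : ℝ) L}

/-- The standard basis vector `e_i`. -/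
def e3 (i : Fin 3) : E3 := EuclideanSpace.single i 1

/-- `u` is `L`-periodic in each coordinate direction. -/
def Periodic3 (L : ℝ) {α : Type*} (u : E3 → α) : Prop :=
  ∀ (x : E3) (i : Fin 3), u (x + L • e3 i) = u x

/-- `|∇u|² = Σ_{i,j} (∂u_j/∂x_i)²`. -/
def gradNormSq (u : E3 → E3) (x : E3) : ℝ :=
  ∑ i, ∑ j, (fderiv ℝ u x (e3 i) j) ^ 2

/-- `|∇f|²` for a scalar function. -/
def gradNormSqScalar (f : E3 → ℝ) (x : E3) : ℝ :=
  ∑ i, (fderiv ℝ f x (e3 i)) ^ 2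

/-- `u` is divergence free. -/
def divFree (u : E3 → E3) : Prop := ∀ x, ∑ i, fderiv ℝ u x (e3 i) i = 0

/-- The Laplacian `Δu`. -/
def lap (u : E3 → E3) (x : E3) : E3 :=
  ∑ i, fderiv ℝ (fun y => fderiv ℝ u y (e3 i)) x (e3 i)

/-- The Navier–Stokes trilinear form `b(u,v,w) = ∫ (u·∇)v·w`. -/
def triB (L : ℝ) (u v w : E3 → E3) : ℝ :=
  ∫ x in box L, ∑ i, ∑ j, u x i * fderiv ℝ v x (e3 i) j * w x j

/-- The `L^p` norm over the fundamental domain (for a real exponent `p`). -/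
def LpNorm (L p : ℝ) (u : E3 → E3) : ℝ := (∫ x in box L, ‖u x‖ ^ p) ^ (1 / p)

/-- The square of the `V`-norm, `‖u‖_V² = ∫ |∇u|²`. -/
def VnormSq (L : ℝ) (u : E3 → E3) : ℝ := ∫ x in box L, gradNormSq u x

/-- The `V`-norm `‖u‖_V = ‖∇u‖_{L²}`. -/
def Vnorm (L : ℝ) (u : E3 → E3) : ℝ := Real.sqrt (VnormSq L u)

/-- For `r ≥ 3`,
`|b(u₁,u₂,u₁)| ≤ ‖u₁‖_{L^{r+1}}^{(r+1)/(r-1)} ‖u₁‖_{L²}^{(r-3)/(r-1)} ‖u₂‖_V`. -/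
lemma isCompact_box (L : ℝ) : IsCompact (box L) := by
  have h : box L = (⇑(EuclideanSpace.equiv (Fin 3) ℝ).symm) '' (Set.univ.pi fun _ => Set.Icc (0:ℝ) L) := by
    ext x
    constructor
    · intro hx
      exact ⟨EuclideanSpace.equiv (Fin 3) ℝ x, fun i _ => hx i, rfl⟩
    · rintro ⟨y, hy, rfl⟩ i
      exact hy i (Set.mem_univ i)
  rw [h]
  exact (isCompact_univ_pi fun _ => isCompact_Icc).image
    (EuclideanSpace.equiv (Fin 3) ℝ).symm.continuous
lemma cs3 (a b : Fin 3 → ℝ) (M : Fin 3 → Fin 3 → ℝ) :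
    |∑ i, ∑ j, a i * M i j * b j|
      ≤ Real.sqrt (∑ i, a i ^ 2) * Real.sqrt (∑ i, ∑ j, M i j ^ 2)
        * Real.sqrt (∑ j, b j ^ 2) := by
  set c : Fin 3 → ℝ := fun i => ∑ j, M i j * b j with hc
  have h1 : ∑ i, ∑ j, a i * M i j * b j = ∑ i, a i * c i := by
    simp only [hc, Finset.mul_sum, mul_assoc]
  rw [h1]
  have hCS : (∑ i, a i * c i) ^ 2 ≤ (∑ i, a i ^ 2) * ∑ i, c i ^ 2 :=
    Finset.sum_mul_sq_le_sq_mul_sq _ _ _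
  have hc2 : ∑ i, c i ^ 2 ≤ (∑ i, ∑ j, M i j ^ 2) * ∑ j, b j ^ 2 := by
    rw [Finset.sum_mul]
    apply Finset.sum_le_sum
    intro i _
    exact Finset.sum_mul_sq_le_sq_mul_sq _ _ _
  have habs : |∑ i, a i * c i| = Real.sqrt ((∑ i, a i * c i) ^ 2) := by
    rw [Real.sqrt_sq_eq_abs]
  rw [habs, mul_assoc, ← Real.sqrt_mul (by positivity), ← Real.sqrt_mul (by positivity)]
  apply Real.sqrt_le_sqrt
  calc (∑ i, a i * c i) ^ 2 ≤ (∑ i, a i ^ 2) * ∑ i, c i ^ 2 := hCS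
    _ ≤ (∑ i, a i ^ 2) * ((∑ i, ∑ j, M i j ^ 2) * ∑ j, b j ^ 2) := by
        apply mul_le_mul_of_nonneg_left hc2 (by positivity)
lemma cont_deriv {u : E3 → E3} (h : ContDiff ℝ (⊤ : ℕ∞) u) (v : E3) (j : Fin 3) :
    Continuous (fun x => fderiv ℝ u x v j) := by
  have h1 : Continuous (fun x => fderiv ℝ u x) := h.continuous_fderiv (by simp)
  have h2 : Continuous (fun x => fderiv ℝ u x v) := h1.clm_apply continuous_const
  exact (continuous_apply j).comp ((PiLp.continuous_ofLp 2 _).comp h2)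

lemma cont_gradNormSq {u : E3 → E3} (h : ContDiff ℝ (⊤ : ℕ∞) u) :
    Continuous (gradNormSq u) := by
  apply continuous_finset_sum
  intro i _
  apply continuous_finset_sum
  intro j _
  exact (cont_deriv h _ j).pow 2

lemma finiteBox (L : ℝ) : IsFiniteMeasure (volume.restrict (box L)) := by
  constructor
  rw [Measure.restrict_apply_univ]
  exact (isCompact_box L).measure_lt_top

lemma memLp_box (L : ℝ) (p : ENNReal) {f : E3 → ℝ} (hf : Continuous f) :
    MemLp f p (volume.restrict (box L)) := by
  have := finiteBox L
  obtain ⟨C, hC⟩ := (isCompact_box L).exists_bound_of_continuousOn hf.continuousOn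
  refine MemLp.of_bound hf.aestronglyMeasurable C ?_
  exact (ae_restrict_iff' (isCompact_box L).isClosed.measurableSet).mpr
    (Filter.Eventually.of_forall hC)

theorem stmt5 (L r : ℝ) (hL : 0 < L) (hr : 3 ≤ r)
    (u₁ u₂ : E3 → E3)
    (h1 : ContDiff ℝ (⊤ : ℕ∞) u₁) (h2 : ContDiff ℝ (⊤ : ℕ∞) u₂)
    (h1p : Periodic3 L u₁) (h2p : Periodic3 L u₂)
    (h1d : divFree u₁) (h2d : divFree u₂) :
    |triB L u₁ u₂ u₁|
      ≤ LpNorm L (r + 1) u₁ ^ ((r + 1) / (r - 1))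
        * LpNorm L 2 u₁ ^ ((r - 3) / (r - 1)) * Vnorm L u₂ := by
  have hfin := finiteBox L
  have hcu1 : Continuous u₁ := h1.continuous
  have hF : Continuous (fun x => ‖u₁ x‖) := hcu1.norm
  have hG : Continuous (fun x => Real.sqrt (gradNormSq u₂ x)) :=
    Real.continuous_sqrt.comp (cont_gradNormSq h2)
  have hg0 : ∀ x, 0 ≤ gradNormSq u₂ x := fun x => by
    unfold gradNormSq; positivity
  have hint : ∀ {f : E3 → ℝ}, Continuous f →
      Integrable f (volume.restrict (box L)) := fun hf =>
    memLp_one_iff_integrable.mp (memLp_box L 1 hf)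
  -- continuity of the triB integrand
  have hintegrand : Continuous
      (fun x => ∑ i, ∑ j, u₁ x i * fderiv ℝ u₂ x (e3 i) j * u₁ x j) := by
    apply continuous_finset_sum; intro i _
    apply continuous_finset_sum; intro j _
    exact (((continuous_apply i).comp ((PiLp.continuous_ofLp 2 _).comp hcu1)).mul (cont_deriv h2 (e3 i) j)).mul
      ((continuous_apply j).comp ((PiLp.continuous_ofLp 2 _).comp hcu1))
  -- pointwise Cauchy–Schwarz bound
  have hptA : ∀ x, |∑ i, ∑ j, u₁ x i * fderiv ℝ u₂ x (e3 i) j * u₁ x j|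
      ≤ ‖u₁ x‖ ^ 2 * Real.sqrt (gradNormSq u₂ x) := by
    intro x
    have h := cs3 (fun i => u₁ x i) (fun j => u₁ x j)
      (fun i j => fderiv ℝ u₂ x (e3 i) j)
    have hnorm : ‖u₁ x‖ = Real.sqrt (∑ i, (u₁ x i) ^ 2) := by
      rw [EuclideanSpace.norm_eq]
      congr 1
      exact Finset.sum_congr rfl fun i _ => by rw [Real.norm_eq_abs, sq_abs]
    calc |∑ i, ∑ j, u₁ x i * fderiv ℝ u₂ x (e3 i) j * u₁ x j|
        ≤ Real.sqrt (∑ i, (u₁ x i) ^ 2) * Real.sqrt (∑ i, ∑ j, (fderiv ℝ u₂ x (e3 i) j) ^ 2)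
            * Real.sqrt (∑ j, (u₁ x j) ^ 2) := h
      _ = ‖u₁ x‖ ^ 2 * Real.sqrt (gradNormSq u₂ x) := by
          rw [hnorm, gradNormSq, sq]; ring
  -- Step A
  have hA : |triB L u₁ u₂ u₁|
      ≤ ∫ x in box L, ‖u₁ x‖ ^ 2 * Real.sqrt (gradNormSq u₂ x) := by
    unfold triB
    calc |∫ x in box L, ∑ i, ∑ j, u₁ x i * fderiv ℝ u₂ x (e3 i) j * u₁ x j|
        ≤ ∫ x in box L, |∑ i, ∑ j, u₁ x i * fderiv ℝ u₂ x (e3 i) j * u₁ x j| := by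
          simpa [Real.norm_eq_abs] using
            norm_integral_le_integral_norm (μ := volume.restrict (box L))
              (fun x => ∑ i, ∑ j, u₁ x i * fderiv ℝ u₂ x (e3 i) j * u₁ x j)
      _ ≤ ∫ x in box L, ‖u₁ x‖ ^ 2 * Real.sqrt (gradNormSq u₂ x) :=
          integral_mono (hint hintegrand).abs (hint ((hF.pow 2).mul hG))
            fun x => hptA x
  -- Step B : Hölder with p = q = 2
  have h22 : (2:ℝ).HolderConjugate 2 := Real.holderConjugate_iff.mpr ⟨one_lt_two, by norm_num⟩
  have hB : (∫ x in box L, ‖u₁ x‖ ^ 2 * Real.sqrt (gradNormSq u₂ x))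
      ≤ (∫ x in box L, ‖u₁ x‖ ^ (4:ℝ)) ^ (1/(2:ℝ)) * Vnorm L u₂ := by
    have hh := integral_mul_le_Lp_mul_Lq_of_nonneg h22
      (f := fun x => ‖u₁ x‖ ^ 2) (g := fun x => Real.sqrt (gradNormSq u₂ x))
      (Filter.Eventually.of_forall fun x => by positivity)
      (Filter.Eventually.of_forall fun x => Real.sqrt_nonneg _)
      (memLp_box L _ (hF.pow 2)) (memLp_box L _ hG)
    have e1 : (∫ x in box L, ((‖u₁ x‖ ^ 2 : ℝ)) ^ (2:ℝ))
        = ∫ x in box L, ‖u₁ x‖ ^ (4:ℝ) := by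
      refine integral_congr_ae (Filter.Eventually.of_forall fun x => ?_)
      dsimp only
      rw [← Real.rpow_natCast (‖u₁ x‖) 2, ← Real.rpow_mul (norm_nonneg _)]
      norm_num
    have e2 : (∫ x in box L, (Real.sqrt (gradNormSq u₂ x)) ^ (2:ℝ))
        = VnormSq L u₂ := by
      refine integral_congr_ae (Filter.Eventually.of_forall fun x => ?_)
      dsimp only
      rw [show (2:ℝ) = ((2:ℕ):ℝ) by norm_num, Real.rpow_natCast,
        Real.sq_sqrt (hg0 x)]
    rw [e1, e2] at hh
    have e3' : (VnormSq L u₂) ^ (1/(2:ℝ)) = Vnorm L u₂ := by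
      rw [Vnorm, Real.sqrt_eq_rpow]
    rw [e3'] at hh
    exact hh
  -- Step C : interpolation
  have hI40 : (0:ℝ) ≤ ∫ x in box L, ‖u₁ x‖ ^ (4:ℝ) :=
    integral_nonneg fun x => Real.rpow_nonneg (norm_nonneg _) _
  have hIr0 : (0:ℝ) ≤ ∫ x in box L, ‖u₁ x‖ ^ (r+1) :=
    integral_nonneg fun x => Real.rpow_nonneg (norm_nonneg _) _
  have hI20 : (0:ℝ) ≤ ∫ x in box L, ‖u₁ x‖ ^ (2:ℝ) :=
    integral_nonneg fun x => Real.rpow_nonneg (norm_nonneg _) _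
  have hC : (∫ x in box L, ‖u₁ x‖ ^ (4:ℝ)) ^ (1/(2:ℝ))
      ≤ LpNorm L (r + 1) u₁ ^ ((r + 1) / (r - 1))
        * LpNorm L 2 u₁ ^ ((r - 3) / (r - 1)) := by
    rcases eq_or_lt_of_le hr with h3 | h3
    · -- r = 3
      subst h3
      rw [LpNorm, LpNorm]
      norm_num
      rw [← Real.rpow_natCast _ 2,
        ← Real.rpow_mul (integral_nonneg fun x => by positivity)]
      norm_num
    · -- r > 3
      have hr1 : (0:ℝ) < r - 1 := by linarith
      have hr3 : (0:ℝ) < r - 3 := by linarith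
      have hrp : (0:ℝ) < r + 1 := by linarith
      set p := (r-1)/2 with hp
      set q := (r-1)/(r-3) with hq
      set α := 2*(r+1)/(r-1) with hα
      set β := 2*(r-3)/(r-1) with hβ
      have hα0 : 0 ≤ α := by positivity
      have hβ0 : 0 ≤ β := by positivity
      have hpq : p.HolderConjugate q := by
        rw [Real.holderConjugate_iff]; constructor
        · rw [hp, lt_div_iff₀ (by norm_num : (0:ℝ) < 2)]; linarith
        · rw [hp, hq]; field_simp; ring
      have hfc : Continuous (fun x => ‖u₁ x‖ ^ α) :=
        (Real.continuous_rpow_const hα0).comp hF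
      have hgc : Continuous (fun x => ‖u₁ x‖ ^ β) :=
        (Real.continuous_rpow_const hβ0).comp hF
      have hab : α + β = 4 := by rw [hα, hβ]; field_simp; ring
      have hap : α * p = r + 1 := by rw [hα, hp]; field_simp
      have hbq : β * q = 2 := by rw [hβ, hq]; field_simp
      have hh := integral_mul_le_Lp_mul_Lq_of_nonneg hpq
        (f := fun x => ‖u₁ x‖ ^ α) (g := fun x => ‖u₁ x‖ ^ β)
        (Filter.Eventually.of_forall fun x => Real.rpow_nonneg (norm_nonneg _) _)
        (Filter.Eventually.of_forall fun x => Real.rpow_nonneg (norm_nonneg _) _)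
        (memLp_box L _ hfc) (memLp_box L _ hgc)
      have e1 : (∫ x in box L, ‖u₁ x‖ ^ α * ‖u₁ x‖ ^ β)
          = ∫ x in box L, ‖u₁ x‖ ^ (4:ℝ) := by
        refine integral_congr_ae (Filter.Eventually.of_forall fun x => ?_)
        dsimp only
        rw [← Real.rpow_add' (norm_nonneg _) (by rw [hab]; norm_num), hab]
      have e2 : (∫ x in box L, (‖u₁ x‖ ^ α) ^ p) = ∫ x in box L, ‖u₁ x‖ ^ (r+1) := by
        refine integral_congr_ae (Filter.Eventually.of_forall fun x => ?_)
        dsimp only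
        rw [← Real.rpow_mul (norm_nonneg _), hap]
      have e3 : (∫ x in box L, (‖u₁ x‖ ^ β) ^ q) = ∫ x in box L, ‖u₁ x‖ ^ (2:ℝ) := by
        refine integral_congr_ae (Filter.Eventually.of_forall fun x => ?_)
        dsimp only
        rw [← Real.rpow_mul (norm_nonneg _), hbq]
      rw [e1, e2, e3] at hh
      have hrq : 1/p = 2/(r-1) := by rw [hp, one_div_div]
      have hrq' : 1/q = (r-3)/(r-1) := by rw [hq, one_div_div]
      rw [hrq, hrq'] at hh
      have key := Real.rpow_le_rpow hI40 hh (by norm_num : (0:ℝ) ≤ 1/2)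
      calc (∫ x in box L, ‖u₁ x‖ ^ (4:ℝ)) ^ (1/(2:ℝ))
          ≤ ((∫ x in box L, ‖u₁ x‖ ^ (r+1)) ^ (2/(r-1))
              * (∫ x in box L, ‖u₁ x‖ ^ (2:ℝ)) ^ ((r-3)/(r-1))) ^ (1/(2:ℝ)) := key
        _ = (∫ x in box L, ‖u₁ x‖ ^ (r+1)) ^ (2/(r-1) * (1/2))
            * (∫ x in box L, ‖u₁ x‖ ^ (2:ℝ)) ^ ((r-3)/(r-1) * (1/2)) := by
            rw [Real.mul_rpow (Real.rpow_nonneg hIr0 _) (Real.rpow_nonneg hI20 _),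
              ← Real.rpow_mul hIr0, ← Real.rpow_mul hI20]
        _ = LpNorm L (r + 1) u₁ ^ ((r + 1) / (r - 1))
            * LpNorm L 2 u₁ ^ ((r - 3) / (r - 1)) := by
            unfold LpNorm
            rw [← Real.rpow_mul hIr0, ← Real.rpow_mul hI20,
              show (1/(r+1)) * ((r+1)/(r-1)) = 2/(r-1) * (1/2) from by
                field_simp,
              show (1/(2:ℝ)) * ((r-3)/(r-1)) = (r-3)/(r-1) * (1/2) from by ring]
  -- combine
  have hV0 : 0 ≤ Vnorm L u₂ := Real.sqrt_nonneg _
  calc |triB L u₁ u₂ u₁|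
      ≤ ∫ x in box L, ‖u₁ x‖ ^ 2 * Real.sqrt (gradNormSq u₂ x) := hA
    _ ≤ (∫ x in box L, ‖u₁ x‖ ^ (4:ℝ)) ^ (1/(2:ℝ)) * Vnorm L u₂ := hB
    _ ≤ LpNorm L (r + 1) u₁ ^ ((r + 1) / (r - 1))
        * LpNorm L 2 u₁ ^ ((r - 3) / (r - 1)) * Vnorm L u₂ :=
        mul_le_mul_of_nonneg_right hC hV0
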